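/- Let M = (S, R, p, q) be a Kripke structure where S is a set of states, R is a total (serial) binary relation on S (every state has an R-successor), and p, q : S → Prop are atomic predicates. Then for every state s ∈ S, s satisfies the CTL formula AG A[p W q] if and only if s satisfies the CTL formula AG (p ∨ q). -/
import Mathlib


/-- `IsPath R π s`: `π` is a path from `s` in the Kripke structure with transition
relation `R`. -/
def IsPath {S : Type*} (R : S → S → Prop) (π : ℕ → S) (s : S) : Prop :=
  π 0 = s ∧ ∀ i, R (π i) (π (i + 1))

/-- CTL semantics of `A[p W q]` (universal weak until) at a state `s`. -/
def SatAW {S : Type*} (R : S → S → Prop) (p q : S → Prop) (s : S) : Prop :=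
  ∀ π : ℕ → S, IsPath R π s →
    (∀ i, p (π i)) ∨ ∃ j, q (π j) ∧ ∀ i < j, p (π i)

/-- CTL semantics of `AG φ` at a state `s`. -/
def SatAG {S : Type*} (R : S → S → Prop) (φ : S → Prop) (s : S) : Prop :=
  ∀ π : ℕ → S, IsPath R π s → ∀ i, φ (π i)

theorem AG_AW_iff_AG_or
    {S : Type*} (R : S → S → Prop) (hser : ∀ s, ∃ t, R s t)
    (p q : S → Prop) :
    ∀ s : S, SatAG R (SatAW R p q) s ↔ SatAG R (fun t => p t ∨ q t) s := by
  classical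
  intro s
  constructor
  · intro h π hπ i
    -- shifted path from π i
    have hsh : IsPath R (fun k => π (i + k)) (π i) := by
      refine ⟨rfl, fun k => ?_⟩
      simpa [Nat.add_assoc] using hπ.2 (i + k)
    have := h π hπ i (fun k => π (i + k)) hsh
    rcases this with hp | ⟨j, hq, hpj⟩
    · exact Or.inl (by simpa using hp 0)
    · rcases Nat.eq_zero_or_pos j with rfl | hj
      · exact Or.inr (by simpa using hq)
      · exact Or.inl (by simpa using hpj 0 hj)
  · intro h π hπ i σ hσ
    -- every point of σ is reachable from s via π then σ
    have hall : ∀ k, p (σ k) ∨ q (σ k) := by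
      intro k
      set τ : ℕ → S := fun n => if n < i then π n else σ (n - i) with hτ
      have hτpath : IsPath R τ s := by
        constructor
        · by_cases h0 : 0 < i
          · simpa [hτ, h0] using hπ.1
          · have : i = 0 := by omega
            simp [hτ, this, hσ.1, ← hπ.1]
        · intro n
          by_cases hn : n + 1 < i
          · have hn' : n < i := by omega
            simpa [hτ, hn, hn'] using hπ.2 n
          · by_cases hn2 : n < i
            · have : n + 1 = i := by omega
              have : τ (n + 1) = π (n + 1) := by
                simp [hτ, this, hσ.1]
              rw [this]
              simpa [hτ, hn2] using hπ.2 n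
            · have h1 : n + 1 - i = (n - i) + 1 := by omega
              simpa [hτ, hn, hn2, h1, Nat.lt_irrefl] using hσ.2 (n - i)
      have := h τ hτpath (i + k)
      simpa [hτ, Nat.add_sub_cancel_left] using this
    by_cases hp : ∀ k, p (σ k)
    · exact Or.inl hp
    · push_neg at hp
      have hex : ∃ k, ¬ p (σ k) := hp
      refine Or.inr ⟨Nat.find hex, ?_, ?_⟩
      · rcases hall (Nat.find hex) with h1 | h1
        · exact absurd h1 (Nat.find_spec hex)
        · exact h1
      · intro m hm
        by_contra hcon
        exact hm.not_ge (Nat.find_le hcon)
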